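/- Let σ₁₃, σ₂₃ ≥ 0 with σ₁₃ ≠ σ₂₃, let α > 3, and define γ₂ : ℝ → ℝ by γ₂(φ) = (3/(2√2))·[σ₁₃((1+φ)/2)²(2−φ) + σ₂₃((1−φ)/2)²(2+φ) + (α/16)|σ₂₃−σ₁₃|(1−φ²)²]. Then γ₂″(1) > 0 and γ₂″(−1) > 0, i.e. γ₂ has a strictly convex double-well structure at the pure-phase values φ = ±1. -/

import Mathlib

private lemma quartic_hasDerivAt (a0 a1 a2 a3 a4 x : ℝ) :
    HasDerivAt (fun φ : ℝ => a0 + a1 * φ + a2 * φ ^ 2 + a3 * φ ^ 3 + a4 * φ ^ 4)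
      (a1 + 2 * a2 * x + 3 * a3 * x ^ 2 + 4 * a4 * x ^ 3) x := by
  have h := ((((hasDerivAt_const x a0).add ((hasDerivAt_id x).const_mul a1)).add
      ((hasDerivAt_pow 2 x).const_mul a2)).add
      ((hasDerivAt_pow 3 x).const_mul a3)).add
      ((hasDerivAt_pow 4 x).const_mul a4)
  convert h using 1
  · rfl
  · rfl
  · funext φ; simp only [Pi.add_apply, id]
  · push_cast; ring_nf

private lemma cubic_hasDerivAt (a1 a2 a3 a4 x : ℝ) :
    HasDerivAt (fun φ : ℝ => a1 + 2 * a2 * φ + 3 * a3 * φ ^ 2 + 4 * a4 * φ ^ 3)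
      (2 * a2 + 6 * a3 * x + 12 * a4 * x ^ 2) x := by
  have h := (((hasDerivAt_const x a1).add ((hasDerivAt_id x).const_mul (2 * a2))).add
      ((hasDerivAt_pow 2 x).const_mul (3 * a3))).add
      ((hasDerivAt_pow 3 x).const_mul (4 * a4))
  convert h using 1
  · rfl
  · rfl
  · funext φ; simp only [Pi.add_apply, id]
  · push_cast; ring_nf

/-- For `σ₁₃, σ₂₃ ≥ 0` with `σ₁₃ ≠ σ₂₃` and `α > 3`, the
dynamically consistent interpolation
`γ₂(φ) = (3/(2√2))·[σ₁₃((1+φ)/2)²(2−φ) + σ₂₃((1−φ)/2)²(2+φ) + (α/16)|σ₂₃−σ₁₃|(1−φ²)²]`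
has strictly positive second derivative at `φ = ±1` (strictly convex
double-well structure at the pure-phase values). -/
theorem gamma2_double_well (σ₁₃ σ₂₃ α : ℝ) (h13 : 0 ≤ σ₁₃) (h23 : 0 ≤ σ₂₃)
    (hne : σ₁₃ ≠ σ₂₃) (hα : 3 < α) (γ₂ : ℝ → ℝ)
    (hγ₂ : ∀ φ : ℝ, γ₂ φ =
      3 / (2 * Real.sqrt 2) *
        (σ₁₃ * ((1 + φ) / 2) ^ 2 * (2 - φ) + σ₂₃ * ((1 - φ) / 2) ^ 2 * (2 + φ) +
          α / 16 * |σ₂₃ - σ₁₃| * (1 - φ ^ 2) ^ 2)) :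
    0 < deriv (deriv γ₂) 1 ∧ 0 < deriv (deriv γ₂) (-1) := by
  set c : ℝ := 3 / (2 * Real.sqrt 2) with hc
  set k : ℝ := α / 16 * |σ₂₃ - σ₁₃| with hk
  set a0 : ℝ := c * ((σ₁₃ + σ₂₃) / 2 + k)
  set a1 : ℝ := c * (3 * (σ₁₃ - σ₂₃) / 4)
  set a2 : ℝ := c * (-2 * k)
  set a3 : ℝ := c * ((σ₂₃ - σ₁₃) / 4)
  set a4 : ℝ := c * k
  have hfun : γ₂ = fun φ : ℝ => a0 + a1 * φ + a2 * φ ^ 2 + a3 * φ ^ 3 + a4 * φ ^ 4 := by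
    funext φ
    rw [hγ₂ φ]
    simp only [a0, a1, a2, a3, a4, hk, hc]
    ring
  have hd1 : deriv γ₂ = fun x : ℝ => a1 + 2 * a2 * x + 3 * a3 * x ^ 2 + 4 * a4 * x ^ 3 := by
    funext x
    rw [hfun]
    exact (quartic_hasDerivAt a0 a1 a2 a3 a4 x).deriv
  have hd2 : ∀ x : ℝ, deriv (deriv γ₂) x = 2 * a2 + 6 * a3 * x + 12 * a4 * x ^ 2 := by
    intro x
    rw [hd1]
    exact (cubic_hasDerivAt a1 a2 a3 a4 x).deriv
  have hcpos : 0 < c := by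
    have : 0 < Real.sqrt 2 := Real.sqrt_pos.mpr (by norm_num)
    positivity
  have hdne : σ₂₃ - σ₁₃ ≠ 0 := sub_ne_zero.mpr (Ne.symm hne)
  have habs : 0 < |σ₂₃ - σ₁₃| := abs_pos.mpr hdne
  have hle : -(|σ₂₃ - σ₁₃|) ≤ σ₂₃ - σ₁₃ := neg_abs_le _
  have hge : σ₂₃ - σ₁₃ ≤ |σ₂₃ - σ₁₃| := le_abs_self _
  constructor
  · rw [hd2 1]
    have : 2 * a2 + 6 * a3 * 1 + 12 * a4 * 1 ^ 2
        = c * (8 * k + 3 / 2 * (σ₂₃ - σ₁₃)) := by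
      simp only [a2, a3, a4]; ring
    rw [this]
    apply mul_pos hcpos
    simp only [hk]
    nlinarith [habs, hle, hα]
  · rw [hd2 (-1)]
    have : 2 * a2 + 6 * a3 * (-1) + 12 * a4 * (-1) ^ 2
        = c * (8 * k - 3 / 2 * (σ₂₃ - σ₁₃)) := by
      simp only [a2, a3, a4]; ring
    rw [this]
    apply mul_pos hcpos
    simp only [hk]
    nlinarith [habs, hge, hα]
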